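/- Let (Ω, A, P) be a complete probability space, Y : Ω → E and X : Ω → S measurable maps into filtered Polish spaces. Then (Y×X)_*P is a causal transference plan from Y_*P to X_*P if and only if for every t ∈ [0,1] and every A ∈ B_t(S), P(X ∈ A | G_t^Y) = P(X ∈ A | σ(Y)) almost surely, where G_t^Y is the P-augmented filtration generated by Y. -/

import Mathlib

open MeasureTheory ProbabilityTheory Filter Set Topology

noncomputable section

/-- The augmentation of a sub-σ-field `m` by the `η`-null sets. -/
def aug {α : Type*} [MeasurableSpace α] (η : Measure α) (m : MeasurableSpace α) :
    MeasurableSpace α :=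
  m ⊔ MeasurableSpace.generateFrom {s : Set α | η s = 0}

/-- `Θ` is a conditional probability kernel of `γ` with respect to `η`. -/
def IsCondKernel {E S : Type*} [MeasurableSpace E] [MeasurableSpace S]
    (η : Measure E) (γ : Measure (E × S)) (Θ : Kernel E S) : Prop :=
  IsMarkovKernel Θ ∧ ∀ A B, MeasurableSet A → MeasurableSet B →
    γ (A ×ˢ B) = ∫⁻ ω in A, Θ ω B ∂η

/-- A plan `γ` on `E × S` with first marginal `η` is causal for the filtrations
`ℱE`, `ℱS` if it admits a conditional kernel `Θ` with respect to `η` such that for every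
`t` and every `C ∈ ℱS t`, `ω ↦ Θ ω C` is measurable for the `η`-augmentation of `ℱE t`. -/
def CausalPlan {E S : Type*} [MeasurableSpace E] [MeasurableSpace S]
    (ℱE : unitInterval → MeasurableSpace E) (ℱS : unitInterval → MeasurableSpace S)
    (η : Measure E) (γ : Measure (E × S)) : Prop :=
  γ.fst = η ∧ ∃ Θ : Kernel E S, IsCondKernel η γ Θ ∧
    ∀ t : unitInterval, ∀ C : Set S, MeasurableSet[ℱS t] C →
      Measurable[aug η (ℱE t)] (fun ω => Θ ω C)

section Aux

open scoped symmDiff ENNReal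

variable {α : Type*}

lemma aug_measurableSet_of_null {mα : MeasurableSpace α} {μ : Measure α}
    {m : MeasurableSpace α} {s : Set α} (hs : μ s = 0) : MeasurableSet[@aug α mα μ m] s :=
  (le_sup_right : MeasurableSpace.generateFrom {s : Set α | μ s = 0} ≤ @aug α mα μ m) _
    (MeasurableSpace.measurableSet_generateFrom hs)

lemma measurable_aug_of_ae_eq {β : Type*} [MeasurableSpace β] {mα : MeasurableSpace α}
    {μ : Measure α} {m : MeasurableSpace α} {f g : α → β}
    (hg : Measurable[@aug α mα μ m] g) (h : f =ᵐ[μ] g) : Measurable[@aug α mα μ m] f := by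
  intro t ht
  set N := {x | f x ≠ g x} with hN
  have hN0 : μ N = 0 := ae_iff.mp h
  have h1 : MeasurableSet[@aug α mα μ m] (f ⁻¹' t ∩ N) :=
    aug_measurableSet_of_null (measure_mono_null Set.inter_subset_right hN0)
  have h2 : MeasurableSet[@aug α mα μ m] (g ⁻¹' t ∩ Nᶜ) :=
    (hg ht).inter (aug_measurableSet_of_null hN0).compl
  have heq : f ⁻¹' t = (g ⁻¹' t ∩ Nᶜ) ∪ (f ⁻¹' t ∩ N) := by
    ext x
    by_cases hx : f x = g x
    · simp [N, hx]
    · simp [N, hx]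
  rw [heq]
  exact h2.union h1

lemma aug_exists_symmDiff {mα : MeasurableSpace α} {μ : Measure α}
    {m : MeasurableSpace α} {s : Set α} (hs : MeasurableSet[@aug α mα μ m] s) :
    ∃ s', MeasurableSet[m] s' ∧ μ (s ∆ s') = 0 := by
  let M : MeasurableSpace α :=
    { MeasurableSet' := fun s => ∃ s', MeasurableSet[m] s' ∧ μ (s ∆ s') = 0
      measurableSet_empty := ⟨∅, @MeasurableSet.empty α m, by rw [symmDiff_self, Set.bot_eq_empty]; exact measure_empty⟩
      measurableSet_compl := by
        rintro s ⟨s', hs', h⟩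
        exact ⟨s'ᶜ, hs'.compl, by rwa [compl_symmDiff_compl]⟩
      measurableSet_iUnion := by
        intro f hf
        choose g hg hg0 using hf
        refine ⟨⋃ n, g n, @MeasurableSet.iUnion α _ m _ _ hg, ?_⟩
        refine measure_mono_null ?_ (measure_iUnion_null hg0)
        intro x hx
        rw [Set.mem_symmDiff] at hx
        rcases hx with ⟨hx1, hx2⟩ | ⟨hx1, hx2⟩
        · obtain ⟨n, hn⟩ := Set.mem_iUnion.mp hx1
          exact Set.mem_iUnion.mpr ⟨n, Set.mem_symmDiff.mpr
            (Or.inl ⟨hn, fun h => hx2 (Set.mem_iUnion.mpr ⟨n, h⟩)⟩)⟩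
        · obtain ⟨n, hn⟩ := Set.mem_iUnion.mp hx1
          exact Set.mem_iUnion.mpr ⟨n, Set.mem_symmDiff.mpr
            (Or.inr ⟨hn, fun h => hx2 (Set.mem_iUnion.mpr ⟨n, h⟩)⟩)⟩ }
  have hle : @aug α mα μ m ≤ M := by
    refine sup_le (fun s hs => ⟨s, hs, by rw [symmDiff_self, Set.bot_eq_empty]; exact measure_empty⟩)
      (MeasurableSpace.generateFrom_le fun s hs => ⟨∅, @MeasurableSet.empty α m, by simpa using hs⟩)
  exact hle _ hs

variable {E S Ω : Type*} {mE : MeasurableSpace E} {mS : MeasurableSpace S}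
  {mΩ : MeasurableSpace Ω}

/-- The fundamental set-integral identity for a conditional kernel of the coupling. -/
lemma key_integral (P : Measure Ω) [IsProbabilityMeasure P]
    (Y : Ω → E) (hY : Measurable Y) (X : Ω → S) (hX : Measurable X)
    (γ : Measure (E × S)) (hγ : γ = P.map (fun ω => (Y ω, X ω)))
    (Θ : Kernel E S) (hΘ : IsCondKernel (P.map Y) γ Θ)
    {A : Set S} (hA : MeasurableSet A) {B : Set E} (hB : MeasurableSet B) :
    ∫ ω in Y ⁻¹' B, (Θ (Y ω) A).toReal ∂P
      = ∫ ω in Y ⁻¹' B, Set.indicator A (fun _ => (1 : ℝ)) (X ω) ∂P := by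
  haveI : IsMarkovKernel Θ := hΘ.1
  have hθmeas : Measurable fun e => Θ e A := Θ.measurable_coe hA
  have h1 : ∫ ω in Y ⁻¹' B, (Θ (Y ω) A).toReal ∂P
      = ∫ e in B, (Θ e A).toReal ∂(P.map Y) :=
    (setIntegral_map hB hθmeas.ennreal_toReal.aestronglyMeasurable hY.aemeasurable).symm
  have h2 : ∫ e in B, (Θ e A).toReal ∂(P.map Y)
      = (∫⁻ e in B, Θ e A ∂(P.map Y)).toReal :=
    integral_toReal (hθmeas.aemeasurable.restrict)
      (ae_of_all _ fun e => measure_lt_top (Θ e) A)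
  have h3 : ∫⁻ e in B, Θ e A ∂(P.map Y) = γ (B ×ˢ A) := (hΘ.2 B A hB hA).symm
  have h4 : γ (B ×ˢ A) = P (Y ⁻¹' B ∩ X ⁻¹' A) := by
    rw [hγ, Measure.map_apply (hY.prodMk hX) (hB.prod hA)]
    rfl
  have h5 : ∫ ω in Y ⁻¹' B, Set.indicator A (fun _ => (1 : ℝ)) (X ω) ∂P
      = (P (Y ⁻¹' B ∩ X ⁻¹' A)).toReal := by
    have heq : (fun ω => Set.indicator A (fun _ => (1 : ℝ)) (X ω))
        = Set.indicator (X ⁻¹' A) (fun _ => (1 : ℝ)) := by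
      ext ω
      by_cases h : X ω ∈ A <;> simp [h]
    rw [heq, setIntegral_indicator (hX hA), setIntegral_const, smul_eq_mul, mul_one,
      Set.inter_comm]
    rfl
  rw [h1, h2, h3, h4, h5]

/-- Transfer of set-integral identities along a.e.-equal sets. -/
lemma setIntegral_congr_null_symmDiff (P : Measure Ω) {s t : Set Ω} (h : P (s ∆ t) = 0)
    (f g : Ω → ℝ) (hfg : ∫ ω in t, f ω ∂P = ∫ ω in t, g ω ∂P) :
    ∫ ω in s, f ω ∂P = ∫ ω in s, g ω ∂P := by
  have hae : s =ᵐ[P] t := measure_symmDiff_eq_zero_iff.mp h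
  rw [setIntegral_congr_set hae, setIntegral_congr_set hae, hfg]

lemma indicator_comp_integrable (P : Measure Ω) [IsProbabilityMeasure P]
    (X : Ω → S) (hX : Measurable X) {A : Set S} (hA : MeasurableSet A) :
    Integrable (fun ω => Set.indicator A (fun _ => (1 : ℝ)) (X ω)) P := by
  have heq : (fun ω => Set.indicator A (fun _ => (1 : ℝ)) (X ω))
      = Set.indicator (X ⁻¹' A) (fun _ => (1 : ℝ)) := by
    ext ω
    by_cases h : X ω ∈ A <;> simp [h]
  rw [heq]
  exact (integrable_const (1 : ℝ)).indicator (hX hA)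

lemma kernel_toReal_integrable (P : Measure Ω) [IsProbabilityMeasure P]
    (Y : Ω → E) (hY : Measurable Y) (Θ : Kernel E S) [IsMarkovKernel Θ]
    {A : Set S} (hA : MeasurableSet A) :
    Integrable (fun ω => (Θ (Y ω) A).toReal) P := by
  have hgY : Measurable fun ω => (Θ (Y ω) A).toReal :=
    ((Θ.measurable_coe hA).comp hY).ennreal_toReal
  refine (integrable_const (1 : ℝ)).mono' hgY.aestronglyMeasurable
    (Eventually.of_forall fun ω => ?_)
  rw [Real.norm_eq_abs, abs_of_nonneg ENNReal.toReal_nonneg]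
  calc (Θ (Y ω) A).toReal ≤ (1 : ℝ≥0∞).toReal :=
        ENNReal.toReal_mono (by norm_num) prob_le_one
    _ = 1 := by simp

/-- A conditional kernel composed with `Y` is a version of the conditional expectation of
`1_{X ∈ A}` with respect to any sub-σ-field whose sets are approximated by `Y`-preimages. -/
lemma kernel_comp_ae_eq_condexp (P : Measure Ω) [IsProbabilityMeasure P]
    (Y : Ω → E) (hY : Measurable Y) (X : Ω → S) (hX : Measurable X)
    (γ : Measure (E × S)) (hγ : γ = P.map (fun ω => (Y ω, X ω)))
    (Θ : Kernel E S) (hΘ : IsCondKernel (P.map Y) γ Θ)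
    {A : Set S} (hA : MeasurableSet A)
    {m : MeasurableSpace Ω} (hm : m ≤ mΩ)
    (hmeas : AEStronglyMeasurable[m] (fun ω => (Θ (Y ω) A).toReal) P)
    (happrox : ∀ s, MeasurableSet[m] s → ∃ B, MeasurableSet B ∧ P (s ∆ (Y ⁻¹' B)) = 0) :
    (fun ω => (Θ (Y ω) A).toReal)
      =ᵐ[P] P[(fun ω => Set.indicator A (fun _ => (1 : ℝ)) (X ω)) | m] := by
  haveI : IsMarkovKernel Θ := hΘ.1
  refine ae_eq_condExp_of_forall_setIntegral_eq hm (indicator_comp_integrable P X hX hA)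
    (fun s _ _ => (kernel_toReal_integrable P Y hY Θ hA).restrict)
    (fun s hs _ => ?_) hmeas
  obtain ⟨B, hB, hnull⟩ := happrox s hs
  exact setIntegral_congr_null_symmDiff P hnull _ _ (key_integral P Y hY X hX γ hγ Θ hΘ hA hB)

lemma aesm_of_measurable {Ω : Type*} {m0 : MeasurableSpace Ω} (μ : Measure Ω)
    {m : MeasurableSpace Ω} {f : Ω → ℝ} (hf : Measurable[m] f) :
    AEStronglyMeasurable[m] f μ :=
  hf.stronglyMeasurable.aestronglyMeasurable

lemma comp_comap_measurable {E Ω : Type*} {m : MeasurableSpace E} {g : E → ℝ≥0∞}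
    (hg : Measurable[m] g) (Y : Ω → E) :
    Measurable[MeasurableSpace.comap Y m] fun ω => (g (Y ω)).toReal :=
  (hg.comp (Measurable.of_comap_le le_rfl)).ennreal_toReal

lemma comp_comap_measurable_real {E Ω : Type*} {m : MeasurableSpace E} {g : E → ℝ}
    (hg : Measurable[m] g) (Y : Ω → E) :
    Measurable[MeasurableSpace.comap Y m] fun ω => g (Y ω) :=
  hg.comp (Measurable.of_comap_le le_rfl)

lemma measurable_ofReal_comp {E : Type*} {m : MeasurableSpace E} {f : E → ℝ}
    (hf : Measurable[m] f) : Measurable[m] fun e => ENNReal.ofReal (f e) :=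
  ENNReal.measurable_ofReal.comp hf

end Aux

open scoped symmDiff ENNReal

/-- `(Y×X)_*P` is a causal plan from `Y_*P` to `X_*P` iff for every `t` and
every `A ∈ B_t(S)`, `P(X ∈ A | G_t^Y) = P(X ∈ A | σ(Y))` a.s. -/
theorem causal_coupling_iff_condexp
    {E S Ω : Type*} [MeasurableSpace E] [TopologicalSpace E] [PolishSpace E] [BorelSpace E]
    [MeasurableSpace S] [TopologicalSpace S] [PolishSpace S] [BorelSpace S]
    [MeasurableSpace Ω]
    (ℱE : unitInterval → MeasurableSpace E) (ℱS : unitInterval → MeasurableSpace S)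
    (hmonoE : Monotone ℱE) (hleE : ∀ t, ℱE t ≤ ‹MeasurableSpace E›)
    (hmonoS : Monotone ℱS) (hleS : ∀ t, ℱS t ≤ ‹MeasurableSpace S›)
    (P : Measure Ω) [IsProbabilityMeasure P] (hcomplete : ∀ s : Set Ω, P s = 0 → MeasurableSet s)
    (Y : Ω → E) (hY : Measurable Y) (X : Ω → S) (hX : Measurable X)
    (γ : Measure (E × S)) (hγ : γ = P.map (fun ω => (Y ω, X ω))) :
    CausalPlan ℱE ℱS (P.map Y) γ ↔
      ∀ t : unitInterval, ∀ A : Set S, MeasurableSet[ℱS t] A →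
        P[(fun ω => Set.indicator A (fun _ => (1 : ℝ)) (X ω)) |
            aug P (MeasurableSpace.comap Y (ℱE t))]
          =ᵐ[P]
        P[(fun ω => Set.indicator A (fun _ => (1 : ℝ)) (X ω)) |
            MeasurableSpace.comap Y ‹MeasurableSpace E›] := by
  classical
  have hmt_le : ∀ t : unitInterval,
      aug P (MeasurableSpace.comap Y (ℱE t)) ≤ ‹MeasurableSpace Ω› := by
    intro t
    refine sup_le ?_ (MeasurableSpace.generateFrom_le fun s hs => hcomplete s hs)
    exact (MeasurableSpace.comap_mono (hleE t)).trans hY.comap_le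
  have hσY_le : MeasurableSpace.comap Y ‹MeasurableSpace E› ≤ ‹MeasurableSpace Ω› :=
    hY.comap_le
  have happrox_σY : ∀ s, MeasurableSet[MeasurableSpace.comap Y ‹MeasurableSpace E›] s →
      ∃ B, MeasurableSet B ∧ P (s ∆ (Y ⁻¹' B)) = 0 := by
    rintro s ⟨B, hB, rfl⟩
    exact ⟨B, hB, by rw [symmDiff_self, Set.bot_eq_empty]; exact measure_empty⟩
  have happrox_t : ∀ t : unitInterval, ∀ s,
      MeasurableSet[aug P (MeasurableSpace.comap Y (ℱE t))] s →
      ∃ B, MeasurableSet[ℱE t] B ∧ P (s ∆ (Y ⁻¹' B)) = 0 := by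
    intro t s hs
    obtain ⟨s', hs', hnull⟩ := aug_exists_symmDiff hs
    obtain ⟨B, hB, rfl⟩ := hs'
    exact ⟨B, hB, hnull⟩
  have happrox_t' : ∀ t : unitInterval, ∀ s,
      MeasurableSet[aug P (MeasurableSpace.comap Y (ℱE t))] s →
      ∃ B, MeasurableSet B ∧ P (s ∆ (Y ⁻¹' B)) = 0 := by
    intro t s hs
    obtain ⟨B, hB, hnull⟩ := happrox_t t s hs
    exact ⟨B, hleE t B hB, hnull⟩
  have hcomap_le : ∀ t : unitInterval,
      MeasurableSpace.comap Y (aug (P.map Y) (ℱE t))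
        ≤ aug P (MeasurableSpace.comap Y (ℱE t)) := by
    intro t
    rw [aug, aug, MeasurableSpace.comap_sup, MeasurableSpace.comap_generateFrom]
    refine sup_le_sup le_rfl (MeasurableSpace.generateFrom_le ?_)
    rintro s ⟨u, hu, rfl⟩
    refine MeasurableSpace.measurableSet_generateFrom ?_
    exact le_antisymm ((Measure.le_map_apply hY.aemeasurable u).trans hu.le) (zero_le)
  constructor
  · rintro ⟨hfst, Θ, hΘ, hcaus⟩ t A hA
    haveI : IsMarkovKernel Θ := hΘ.1
    have hAm : MeasurableSet A := hleS t A hA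
    have hmeas_t : Measurable[aug P (MeasurableSpace.comap Y (ℱE t))]
        fun ω => (Θ (Y ω) A).toReal :=
      (comp_comap_measurable (hcaus t A hA) Y).mono (hcomap_le t) le_rfl
    have e1 := kernel_comp_ae_eq_condexp P Y hY X hX γ hγ Θ hΘ hAm (hmt_le t)
      (aesm_of_measurable P hmeas_t) (happrox_t' t)
    have e2 := kernel_comp_ae_eq_condexp P Y hY X hX γ hγ Θ hΘ hAm hσY_le
      (aesm_of_measurable P (comp_comap_measurable (Θ.measurable_coe hAm) Y)) happrox_σY
    exact e1.symm.trans e2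
  · intro hcond
    haveI hγP : IsProbabilityMeasure γ := by
      rw [hγ]; exact Measure.isProbabilityMeasure_map (hY.prodMk hX).aemeasurable
    haveI hΩne : Nonempty Ω := by
      by_contra h
      rw [not_nonempty_iff] at h
      have h1 : (Set.univ : Set Ω) = ∅ := Set.univ_eq_empty_iff.mpr h
      have h2 := measure_univ (μ := P)
      rw [h1, measure_empty] at h2
      exact zero_ne_one h2
    haveI hSne : Nonempty S := ⟨X (Classical.arbitrary Ω)⟩
    haveI : IsProbabilityMeasure (P.map Y) := Measure.isProbabilityMeasure_map hY.aemeasurable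
    have hfst : γ.fst = P.map Y := by
      rw [hγ]; exact Measure.fst_map_prodMk hX
    have hΘcond : IsCondKernel (P.map Y) γ γ.condKernel := by
      refine ⟨inferInstance, fun A B hA hB => ?_⟩
      rw [← hfst]
      exact (Measure.setLIntegral_condKernel_eq_measure_prod hA hB).symm
    refine ⟨hfst, γ.condKernel, hΘcond, ?_⟩
    intro t C hC
    have hCm : MeasurableSet C := hleS t C hC
    have hu_meas : Measurable fun e => (γ.condKernel e C).toReal :=
      (γ.condKernel.measurable_coe hCm).ennreal_toReal
    have e2 := kernel_comp_ae_eq_condexp P Y hY X hX γ hγ γ.condKernel hΘcond hCm hσY_le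
      (aesm_of_measurable P (comp_comap_measurable (γ.condKernel.measurable_coe hCm) Y))
      happrox_σY
    have e1 : (fun ω => (γ.condKernel (Y ω) C).toReal)
        =ᵐ[P] P[(fun ω => Set.indicator C (fun _ => (1 : ℝ)) (X ω)) |
            aug P (MeasurableSpace.comap Y (ℱE t))] :=
      e2.trans (hcond t C hC).symm
    have hu_int : Integrable (fun e => (γ.condKernel e C).toReal) (P.map Y) :=
      kernel_toReal_integrable (P.map Y) id measurable_id γ.condKernel hCm
    have hφ_sm : StronglyMeasurable[ℱE t]
        ((P.map Y)[(fun e => (γ.condKernel e C).toReal) | ℱE t]) :=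
      stronglyMeasurable_condExp
    have hφ_borel : Measurable ((P.map Y)[(fun e => (γ.condKernel e C).toReal) | ℱE t]) :=
      (hφ_sm.mono (hleE t)).measurable
    have e3 : (fun ω => ((P.map Y)[(fun e => (γ.condKernel e C).toReal) | ℱE t]) (Y ω))
        =ᵐ[P] P[(fun ω => Set.indicator C (fun _ => (1 : ℝ)) (X ω)) |
            aug P (MeasurableSpace.comap Y (ℱE t))] := by
      refine ae_eq_condExp_of_forall_setIntegral_eq (hmt_le t)
        (indicator_comp_integrable P X hX hCm) (fun s _ _ => ?_) (fun s hs _ => ?_)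
        (aesm_of_measurable P
          ((comp_comap_measurable_real (hφ_sm.measurable) Y).mono le_sup_left le_rfl))
      · refine Integrable.restrict ?_
        exact (integrable_map_measure (hφ_sm.mono (hleE t)).aestronglyMeasurable
          hY.aemeasurable).mp integrable_condExp
      · obtain ⟨B, hB, hnull⟩ := happrox_t t s hs
        have hBE : MeasurableSet B := hleE t B hB
        refine setIntegral_congr_null_symmDiff P hnull _ _ ?_
        have s1 : ∫ ω in Y ⁻¹' B,
              ((P.map Y)[(fun e => (γ.condKernel e C).toReal) | ℱE t]) (Y ω) ∂P
            = ∫ e in B, ((P.map Y)[(fun e => (γ.condKernel e C).toReal) | ℱE t]) e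
                ∂(P.map Y) :=
          (setIntegral_map hBE (hφ_sm.mono (hleE t)).aestronglyMeasurable
            hY.aemeasurable).symm
        have s2 : ∫ e in B, ((P.map Y)[(fun e => (γ.condKernel e C).toReal) | ℱE t]) e
              ∂(P.map Y) = ∫ e in B, (γ.condKernel e C).toReal ∂(P.map Y) :=
          setIntegral_condExp (hleE t) hu_int hB
        have s3 : ∫ e in B, (γ.condKernel e C).toReal ∂(P.map Y)
            = ∫ ω in Y ⁻¹' B, (γ.condKernel (Y ω) C).toReal ∂P :=
          setIntegral_map hBE hu_meas.aestronglyMeasurable hY.aemeasurable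
        rw [s1, s2, s3]
        exact key_integral P Y hY X hX γ hγ γ.condKernel hΘcond hCm hBE
    have e4 : (fun ω => (γ.condKernel (Y ω) C).toReal)
        =ᵐ[P] fun ω => ((P.map Y)[(fun e => (γ.condKernel e C).toReal) | ℱE t]) (Y ω) :=
      e1.trans e3.symm
    have e5 : (fun e => (γ.condKernel e C).toReal)
        =ᵐ[P.map Y] (P.map Y)[(fun e => (γ.condKernel e C).toReal) | ℱE t] := by
      have hD : MeasurableSet {e | ¬ (γ.condKernel e C).toReal
          = ((P.map Y)[(fun e => (γ.condKernel e C).toReal) | ℱE t]) e} :=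
        (measurableSet_eq_fun hu_meas hφ_borel).compl
      rw [Filter.EventuallyEq, ae_iff, Measure.map_apply hY hD]
      exact ae_iff.mp e4
    have hφ_aug : Measurable[aug (P.map Y) (ℱE t)]
        ((P.map Y)[(fun e => (γ.condKernel e C).toReal) | ℱE t]) :=
      hφ_sm.measurable.mono le_sup_left le_rfl
    have hu_aug : Measurable[aug (P.map Y) (ℱE t)] fun e => (γ.condKernel e C).toReal :=
      measurable_aug_of_ae_eq hφ_aug e5
    have hkey : (fun e => γ.condKernel e C)
        = fun e => ENNReal.ofReal ((γ.condKernel e C).toReal) :=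
      funext fun e => (ENNReal.ofReal_toReal (measure_ne_top _ _)).symm
    rw [hkey]
    exact measurable_ofReal_comp hu_aug
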